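/- For every (z₀, η₀) ∈ Z × H there exists a unique pair (z, η) such that z : ℝ → Z is continuously differentiable, η : ℝ → H is continuous, z(0) = z₀, η(0) = η₀, and for all t ∈ ℝ: z'(t) = J_A(∇H_A(z(t)) + C*(η(t))) and η(t) = S_t(η₀ + C z₀) − C z(t) + ∫₀ᵗ S_{t−s}(C z'(s)) ds. -/

import Mathlib

open RealInnerProductSpace
open Real MeasureTheory Set Function intervalIntegral

set_option linter.unusedVariables false
set_option linter.unusedSectionVars false

section MswHelpers


lemma msw_exp_integral {c : ℝ} (hc : c ≠ 0) (a b : ℝ) :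
    ∫ s in a..b, Real.exp (c * s) = (Real.exp (c * b) - Real.exp (c * a)) / c := by
  have h : ∀ x ∈ Set.uIcc a b, HasDerivAt (fun s => Real.exp (c * s) / c) (Real.exp (c * x)) x := by
    intro x _
    have h1 : HasDerivAt (fun s : ℝ => c * s) c x := by
      simpa using (hasDerivAt_id x).const_mul c
    have h2 := h1.exp.div_const c
    simpa [mul_div_assoc, div_self hc] using h2
  rw [intervalIntegral.integral_eq_sub_of_hasDerivAt h
    ((by fun_prop : Continuous fun s : ℝ => Real.exp (c * s)).intervalIntegrable a b)]
  ring

variable {E : Type*} [NormedAddCommGroup E] [NormedSpace ℝ E] [CompleteSpace E]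

lemma msw_key_est {φ : ℝ → E} (hφ : Continuous φ) {k B M : ℝ} (hk : 0 < k) (hB : 0 ≤ B)
    (hM : 0 ≤ M) (hbd : ∀ s, ‖φ s‖ ≤ B + M * Real.exp (k * |s|)) (t : ℝ) :
    ‖∫ s in (0:ℝ)..t, φ s‖ ≤ B * |t| + M * (Real.exp (k * |t|) - 1) / k := by
  rcases le_or_gt 0 t with ht | ht
  · have hgc : Continuous fun s : ℝ => B + M * Real.exp (k * s) := by fun_prop
    have h1 : ‖∫ s in (0:ℝ)..t, φ s‖ ≤ |∫ s in (0:ℝ)..t, (B + M * Real.exp (k * s))| := by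
      apply intervalIntegral.norm_integral_le_abs_of_norm_le _ (hgc.intervalIntegrable 0 t)
      apply (ae_restrict_iff' measurableSet_uIoc).mpr
      apply Filter.Eventually.of_forall
      intro s hs
      rw [Set.uIoc_of_le ht] at hs
      calc ‖φ s‖ ≤ B + M * Real.exp (k * |s|) := hbd s
        _ = B + M * Real.exp (k * s) := by rw [abs_of_pos hs.1]
    have h2 : ∫ s in (0:ℝ)..t, (B + M * Real.exp (k * s)) =
        B * t + M * (Real.exp (k * t) - 1) / k := by
      rw [intervalIntegral.integral_add intervalIntegrable_const
        ((by fun_prop : Continuous fun s : ℝ => M * Real.exp (k * s)).intervalIntegrable 0 t),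
        intervalIntegral.integral_const,
        intervalIntegral.integral_const_mul, msw_exp_integral hk.ne' 0 t]
      simp [smul_eq_mul]
      ring
    rw [h2] at h1
    have hexp : (1:ℝ) ≤ Real.exp (k * t) := by
      rw [← Real.exp_zero]; exact Real.exp_le_exp.mpr (by positivity)
    rw [abs_of_nonneg ht]
    calc ‖∫ s in (0:ℝ)..t, φ s‖ ≤ |B * t + M * (Real.exp (k * t) - 1) / k| := h1
      _ = B * t + M * (Real.exp (k * t) - 1) / k := by
          apply abs_of_nonneg
          apply add_nonneg (by positivity)
          apply div_nonneg _ hk.le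
          apply mul_nonneg hM; linarith
  · have hgc : Continuous fun s : ℝ => B + M * Real.exp (-k * s) := by fun_prop
    have hsymm : ‖∫ s in (0:ℝ)..t, φ s‖ = ‖∫ s in t..(0:ℝ), φ s‖ := by
      rw [intervalIntegral.integral_symm, norm_neg]
    rw [hsymm]
    have h1 : ‖∫ s in t..(0:ℝ), φ s‖ ≤ |∫ s in t..(0:ℝ), (B + M * Real.exp (-k * s))| := by
      apply intervalIntegral.norm_integral_le_abs_of_norm_le _ (hgc.intervalIntegrable t 0)
      apply (ae_restrict_iff' measurableSet_uIoc).mpr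
      apply Filter.Eventually.of_forall
      intro s hs
      rw [Set.uIoc_of_le ht.le] at hs
      calc ‖φ s‖ ≤ B + M * Real.exp (k * |s|) := hbd s
        _ = B + M * Real.exp (-k * s) := by rw [abs_of_nonpos hs.2]; ring_nf
    have h2 : ∫ s in t..(0:ℝ), (B + M * Real.exp (-k * s)) =
        B * (-t) + M * (Real.exp (-k * t) - 1) / k := by
      rw [intervalIntegral.integral_add intervalIntegrable_const
        ((by fun_prop : Continuous fun s : ℝ => M * Real.exp (-k * s)).intervalIntegrable t 0),
        intervalIntegral.integral_const,
        intervalIntegral.integral_const_mul, msw_exp_integral (c := -k) (by linarith) t 0]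
      simp [smul_eq_mul]
      ring
    rw [h2] at h1
    have hexp : (1:ℝ) ≤ Real.exp (-k * t) := by
      rw [← Real.exp_zero]; exact Real.exp_le_exp.mpr (by nlinarith)
    have habs : |t| = -t := abs_of_neg ht
    rw [habs]
    have hkt : k * -t = -k * t := by ring
    rw [hkt]
    calc ‖∫ s in t..(0:ℝ), φ s‖ ≤ |B * (-t) + M * (Real.exp (-k * t) - 1) / k| := h1
      _ = B * (-t) + M * (Real.exp (-k * t) - 1) / k := by
          apply abs_of_nonneg
          apply add_nonneg (by nlinarith)
          apply div_nonneg _ hk.le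
          apply mul_nonneg hM; linarith


set_option maxHeartbeats 1000000 in
theorem msw_picard (f : ℝ → E → E) (K : NNReal) (hK : 0 < (K : ℝ))
    (hLip : ∀ t, LipschitzWith K (f t))
    (hcont : Continuous (Function.uncurry f))
    (x₀ : E) (A : ℝ) (hA0 : 0 ≤ A) (hA : ∀ t, ‖f t x₀‖ ≤ A) :
    ∃! x : ℝ → E, x 0 = x₀ ∧ ∀ t, HasDerivAt x (f t (x t)) t := by
  set k : ℝ := 2 * K with hkdef
  have hkpos : 0 < k := by positivity
  set u : BoundedContinuousFunction ℝ E → ℝ → E :=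
    fun y t => x₀ + Real.exp (k * |t|) • y t with hu
  have hucont : ∀ y, Continuous (u y) := by
    intro y
    exact continuous_const.add
      (((Real.continuous_exp.comp (continuous_const.mul continuous_abs))).smul y.continuous)
  have hGcont : ∀ y, Continuous fun s => f s (u y s) := fun y =>
    hcont.comp (continuous_id.prodMk (hucont y))
  have hudist : ∀ y₁ y₂ : BoundedContinuousFunction ℝ E, ∀ s : ℝ,
      ‖u y₁ s - u y₂ s‖ ≤ Real.exp (k * |s|) * dist y₁ y₂ := by
    intro y₁ y₂ s
    have : u y₁ s - u y₂ s = Real.exp (k * |s|) • (y₁ s - y₂ s) := by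
      simp only [hu, smul_sub]
      abel
    rw [this, norm_smul, Real.norm_eq_abs, abs_of_pos (Real.exp_pos _)]
    have := BoundedContinuousFunction.dist_coe_le_dist (f := y₁) (g := y₂) s
    rw [dist_eq_norm] at this
    exact mul_le_mul_of_nonneg_left this (Real.exp_pos _).le
  have hfb : ∀ y : BoundedContinuousFunction ℝ E, ∀ s : ℝ,
      ‖f s (u y s)‖ ≤ A + ((K : ℝ) * ‖y‖) * Real.exp (k * |s|) := by
    intro y s
    have h1 : ‖f s (u y s) - f s x₀‖ ≤ (K : ℝ) * ‖u y s - x₀‖ := by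
      have := (hLip s).dist_le_mul (u y s) x₀
      rwa [dist_eq_norm, dist_eq_norm] at this
    have h2 : ‖u y s - x₀‖ = Real.exp (k * |s|) * ‖y s‖ := by
      simp [hu, norm_smul, abs_of_pos (Real.exp_pos _)]
    have h3 : ‖y s‖ ≤ ‖y‖ := BoundedContinuousFunction.norm_coe_le_norm y s
    calc ‖f s (u y s)‖ ≤ ‖f s x₀‖ + ‖f s (u y s) - f s x₀‖ := by
          have := norm_add_le (f s x₀) (f s (u y s) - f s x₀); simpa using this
      _ ≤ A + (K : ℝ) * (Real.exp (k * |s|) * ‖y s‖) := by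
          rw [← h2]; exact add_le_add (hA s) h1
      _ ≤ A + ((K : ℝ) * ‖y‖) * Real.exp (k * |s|) := by
          have := mul_le_mul_of_nonneg_left (mul_le_mul_of_nonneg_left h3
            (Real.exp_pos (k * |s|)).le) (K.coe_nonneg)
          nlinarith [Real.exp_pos (k * |s|)]
  -- the Picard map on BCF
  have key : ∀ y : BoundedContinuousFunction ℝ E, ∀ t : ℝ,
      ‖Real.exp (-(k * |t|)) • ∫ s in (0:ℝ)..t, f s (u y s)‖ ≤ A / k + ‖y‖ / 2 := by
    intro y t
    have hbd := msw_key_est (hGcont y) hkpos hA0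
      (by positivity : (0:ℝ) ≤ (K : ℝ) * ‖y‖) (hfb y) t
    rw [norm_smul, Real.norm_eq_abs, abs_of_pos (Real.exp_pos _)]
    set E1 := Real.exp (k * |t|) with hE1
    set E2 := Real.exp (-(k * |t|)) with hE2
    have hprod : E2 * E1 = 1 := by rw [hE1, hE2, ← Real.exp_add]; simp
    have hE1ge : k * |t| + 1 ≤ E1 := Real.add_one_le_exp _
    have hE2pos : (0:ℝ) < E2 := Real.exp_pos _
    have hE2le : E2 ≤ 1 := by
      rw [hE2]; exact Real.exp_le_one_iff.mpr (neg_nonpos.mpr (by positivity))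
    calc E2 * ‖∫ s in (0:ℝ)..t, f s (u y s)‖
        ≤ E2 * (A * |t| + ((K:ℝ) * ‖y‖) * (E1 - 1) / k) := by
          apply mul_le_mul_of_nonneg_left hbd hE2pos.le
      _ ≤ A / k + ‖y‖ / 2 := by
          have hy : (0:ℝ) ≤ ‖y‖ := norm_nonneg _
          have habs : (0:ℝ) ≤ |t| := abs_nonneg _
          have h1 : E2 * (A * |t|) ≤ A / k := by
            rw [le_div_iff₀ hkpos]
            have h0 : k * |t| * E2 ≤ 1 := by nlinarith
            nlinarith [mul_le_mul_of_nonneg_left h0 hA0]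
          have h2 : E2 * (((K:ℝ) * ‖y‖) * (E1 - 1) / k) ≤ ‖y‖ / 2 := by
            have hKk : (K : ℝ) / k = 1 / 2 := by
              rw [hkdef]; rw [div_eq_div_iff (by positivity) (by norm_num)]; ring
            have : E2 * (E1 - 1) ≤ 1 := by nlinarith
            have h3 : E2 * (((K:ℝ) * ‖y‖) * (E1 - 1) / k)
                = ((K:ℝ) / k) * ‖y‖ * (E2 * (E1 - 1)) := by ring
            rw [h3, hKk]
            nlinarith [mul_le_mul_of_nonneg_left this (by positivity : (0:ℝ) ≤ 1 / 2 * ‖y‖)]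
          nlinarith
  -- the Picard map
  set Φ : BoundedContinuousFunction ℝ E → BoundedContinuousFunction ℝ E := fun y =>
    BoundedContinuousFunction.ofNormedAddCommGroup
      (fun t => Real.exp (-(k * |t|)) • ∫ s in (0:ℝ)..t, f s (u y s))
      (((Real.continuous_exp.comp (continuous_const.mul continuous_abs).neg)).smul
        (intervalIntegral.continuous_primitive
          (fun a b => (hGcont y).intervalIntegrable a b) 0))
      (A / k + ‖y‖ / 2) (key y) with hΦ
  have hΦapp : ∀ y t, Φ y t = Real.exp (-(k * |t|)) • ∫ s in (0:ℝ)..t, f s (u y s) := by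
    intro y t; rfl
  -- contraction
  have hΦlip : LipschitzWith (1/2 : NNReal) Φ := by
    apply LipschitzWith.of_dist_le_mul
    intro y₁ y₂
    have hcoe : ((1/2 : NNReal) : ℝ) = 1/2 := by norm_num
    rw [hcoe]
    refine (BoundedContinuousFunction.dist_le (by positivity)).mpr fun t => ?_
    rw [dist_eq_norm, hΦapp, hΦapp, ← smul_sub,
      ← intervalIntegral.integral_sub ((hGcont y₁).intervalIntegrable 0 t)
        ((hGcont y₂).intervalIntegrable 0 t)]
    have hdiffbd : ∀ s : ℝ, ‖f s (u y₁ s) - f s (u y₂ s)‖ ≤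
        0 + ((K : ℝ) * dist y₁ y₂) * Real.exp (k * |s|) := by
      intro s
      have h1 : ‖f s (u y₁ s) - f s (u y₂ s)‖ ≤ (K : ℝ) * ‖u y₁ s - u y₂ s‖ := by
        have := (hLip s).dist_le_mul (u y₁ s) (u y₂ s)
        rwa [dist_eq_norm, dist_eq_norm] at this
      have h2 := hudist y₁ y₂ s
      calc ‖f s (u y₁ s) - f s (u y₂ s)‖ ≤ (K : ℝ) * ‖u y₁ s - u y₂ s‖ := h1
        _ ≤ (K : ℝ) * (Real.exp (k * |s|) * dist y₁ y₂) :=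
            mul_le_mul_of_nonneg_left h2 K.coe_nonneg
        _ = 0 + ((K : ℝ) * dist y₁ y₂) * Real.exp (k * |s|) := by ring
    have hbd := msw_key_est (((hGcont y₁).sub (hGcont y₂))) hkpos le_rfl
      (by positivity : (0:ℝ) ≤ (K : ℝ) * dist y₁ y₂) hdiffbd t
    rw [norm_smul, Real.norm_eq_abs, abs_of_pos (Real.exp_pos _)]
    set E1 := Real.exp (k * |t|) with hE1
    set E2 := Real.exp (-(k * |t|)) with hE2
    have hprod : E2 * E1 = 1 := by rw [hE1, hE2, ← Real.exp_add]; simp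
    have hE2pos : (0:ℝ) < E2 := Real.exp_pos _
    have hd : (0:ℝ) ≤ dist y₁ y₂ := dist_nonneg
    have hKk : (K : ℝ) / k = 1 / 2 := by
      rw [hkdef]; rw [div_eq_div_iff (by positivity) (by norm_num)]; ring
    calc E2 * ‖∫ s in (0:ℝ)..t, (f s (u y₁ s) - f s (u y₂ s))‖
        ≤ E2 * (0 * |t| + ((K:ℝ) * dist y₁ y₂) * (E1 - 1) / k) :=
          mul_le_mul_of_nonneg_left hbd hE2pos.le
      _ = ((K : ℝ) / k) * dist y₁ y₂ * (E2 * (E1 - 1)) := by ring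
      _ ≤ 1/2 * dist y₁ y₂ := by
          rw [hKk]
          have h5 : E2 * (E1 - 1) ≤ 1 := by nlinarith
          nlinarith [mul_le_mul_of_nonneg_left h5 (by positivity : (0:ℝ) ≤ 1/2 * dist y₁ y₂)]
  have hcontr : ContractingWith (1/2 : NNReal) Φ := ⟨by rw [← NNReal.coe_lt_coe]; norm_num, hΦlip⟩
  set y : BoundedContinuousFunction ℝ E := ContractingWith.fixedPoint Φ hcontr with hy
  have hfix : Φ y = y := hcontr.fixedPoint_isFixedPt
  have hfixt : ∀ t, y t = Real.exp (-(k * |t|)) • ∫ s in (0:ℝ)..t, f s (u y s) := by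
    intro t
    conv_lhs => rw [← hfix]
    exact (hΦapp y t)
  set x : ℝ → E := u y with hx
  have hxeq : ∀ t, x t = x₀ + ∫ s in (0:ℝ)..t, f s (u y s) := by
    intro t
    rw [hx]
    show x₀ + Real.exp (k * |t|) • y t = _
    rw [hfixt t, smul_smul, ← Real.exp_add]
    simp
    rfl
  have hxint : x = fun t => x₀ + ∫ s in (0:ℝ)..t, f s (u y s) := funext hxeq
  have hx0 : x 0 = x₀ := by rw [hxeq 0]; simp
  have hder : ∀ t, HasDerivAt x (f t (x t)) t := by
    intro t
    rw [hxint]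
    have h1 : HasDerivAt (fun r => ∫ s in (0:ℝ)..r, f s (u y s)) (f t (u y t)) t :=
      intervalIntegral.integral_hasDerivAt_right ((hGcont y).intervalIntegrable 0 t)
        ((hGcont y).stronglyMeasurableAtFilter _ _) (hGcont y).continuousAt
    have h2 := h1.const_add x₀
    convert h2 using 2
    rw [show u y t = x t from rfl, hxeq t]
  refine ⟨x, ⟨hx0, hder⟩, ?_⟩
  rintro x' ⟨hx'0, hder'⟩
  funext t
  have hIoo : t ∈ Set.Ioo (-(|t|+1)) (|t|+1) := by
    constructor <;> nlinarith [neg_abs_le t, le_abs_self t]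
  have h0Ioo : (0:ℝ) ∈ Set.Ioo (-(|t|+1)) (|t|+1) := by
    constructor <;> nlinarith [abs_nonneg t]
  exact ODE_solution_unique_of_mem_Ioo (s := fun _ => Set.univ)
    (fun t _ => (hLip t).lipschitzOnWith) h0Ioo
    (fun r _ => ⟨hder' r, trivial⟩) (fun r _ => ⟨hder r, trivial⟩)
    (by rw [hx'0, hx0]) hIoo


end MswHelpers

set_option maxHeartbeats 1000000 in
/-- Let `Z` be a finite-dimensional real inner product space, `H` a
real Hilbert space, `(S_t)_{t∈ℝ}` a strongly continuous group of unitary operators on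
`H`, `J_A : Z → Z` skew-adjoint, `C : Z → H` bounded linear, and `H_A : Z → ℝ`
continuously differentiable with globally Lipschitz gradient.  Then for every
`(z₀, η₀) ∈ Z × H` there is a unique pair `(z, η)` with `z ∈ C¹(ℝ; Z)`,
`η ∈ C(ℝ; H)`, `z(0) = z₀`, `η(0) = η₀`, and for all `t`:
`z'(t) = J_A(∇H_A(z(t)) + C*(η(t)))` and
`η(t) = S_t(η₀ + C z₀) − C z(t) + ∫₀ᵗ S_{t−s}(C z'(s)) ds`. -/
theorem microscopic_system_wellposed
    {Z : Type*} [NormedAddCommGroup Z] [InnerProductSpace ℝ Z] [FiniteDimensional ℝ Z]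
    {H : Type*} [NormedAddCommGroup H] [InnerProductSpace ℝ H] [CompleteSpace H]
    (S : ℝ → H →L[ℝ] H)
    (hS0 : S 0 = ContinuousLinearMap.id ℝ H)
    (hSadd : ∀ t s : ℝ, S (t + s) = (S t) ∘L (S s))
    (hSiso : ∀ (t : ℝ) (x : H), ‖S t x‖ = ‖x‖)
    (hSsurj : ∀ t : ℝ, Function.Surjective (S t))
    (hScont : ∀ η : H, Continuous fun t : ℝ => S t η)
    (JA : Z →L[ℝ] Z) (hJA : ContinuousLinearMap.adjoint JA = -JA)
    (C : Z →L[ℝ] H)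
    (HA : Z → ℝ) (hHA : ContDiff ℝ 1 HA)
    (L : NNReal) (hLip : LipschitzWith L (gradient HA)) :
    ∀ z₀ : Z, ∀ η₀ : H,
      ∃! p : (ℝ → Z) × (ℝ → H),
        ContDiff ℝ 1 p.1 ∧ Continuous p.2 ∧ p.1 0 = z₀ ∧ p.2 0 = η₀ ∧
        ∀ t : ℝ,
          deriv p.1 t = JA (gradient HA (p.1 t) + ContinuousLinearMap.adjoint C (p.2 t)) ∧
          p.2 t = S t (η₀ + C z₀) - C (p.1 t)
            + ∫ s in (0 : ℝ)..t, S (t - s) (C (deriv p.1 s)) := by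
  intro z₀ η₀
  -- joint continuity of (t, w) ↦ S t w
  have hSjoint : Continuous fun q : ℝ × H => S q.1 q.2 := by
    rw [continuous_iff_continuousAt]
    rintro ⟨t₀, w₀⟩
    rw [Metric.continuousAt_iff]
    intro ε hε
    obtain ⟨δ₁, hδ₁, h1⟩ := Metric.continuousAt_iff.mp ((hScont w₀).continuousAt (x := t₀))
      (ε/2) (by linarith)
    refine ⟨min δ₁ (ε/2), by positivity, ?_⟩
    rintro ⟨t, w⟩ hd
    rw [Prod.dist_eq] at hd
    have hdt : dist t t₀ < δ₁ := lt_of_le_of_lt (le_max_left _ _)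
      (lt_of_lt_of_le hd (min_le_left _ _))
    have hdw : dist w w₀ < ε/2 := lt_of_le_of_lt (le_max_right _ _)
      (lt_of_lt_of_le hd (min_le_right _ _))
    have heq : dist (S t w) (S t w₀) = dist w w₀ := by
      rw [dist_eq_norm, dist_eq_norm, ← map_sub, hSiso]
    calc dist (S t w) (S t₀ w₀) ≤ dist (S t w) (S t w₀) + dist (S t w₀) (S t₀ w₀) :=
          dist_triangle _ _ _
      _ < ε/2 + ε/2 := by rw [heq]; exact add_lt_add hdw (h1 hdt)
      _ = ε := by ring
  have hgradc : Continuous (gradient HA) := hLip.continuous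
  set Cs := ContinuousLinearMap.adjoint C with hCs
  set g : ℝ → Z × H → Z := fun t p => JA (gradient HA p.1 + Cs (S t p.2 - C p.1)) with hg
  set f : ℝ → Z × H → Z × H := fun t p => (g t p, S (-t) (C (g t p))) with hf
  set ξ₀ : H := η₀ + C z₀ with hξ₀
  set x₀ : Z × H := (z₀, ξ₀) with hx₀
  -- Lipschitz bounds
  set Kg : NNReal := ‖JA‖₊ * (L + ‖Cs‖₊ * (1 + ‖C‖₊)) with hKg
  have hgLip : ∀ t, LipschitzWith Kg (g t) := by
    intro t
    apply LipschitzWith.of_dist_le_mul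
    intro p q
    rw [dist_eq_norm, dist_eq_norm]
    have h1 : ‖p.1 - q.1‖ ≤ ‖p - q‖ := by
      have := norm_fst_le (p - q); simpa using this
    have h2 : ‖p.2 - q.2‖ ≤ ‖p - q‖ := by
      have := norm_snd_le (p - q); simpa using this
    have hD : (0:ℝ) ≤ ‖p - q‖ := norm_nonneg _
    have hgrad : ‖gradient HA p.1 - gradient HA q.1‖ ≤ (L : ℝ) * ‖p - q‖ := by
      have := hLip.dist_le_mul p.1 q.1
      rw [dist_eq_norm, dist_eq_norm] at this
      exact this.trans (mul_le_mul_of_nonneg_left h1 L.coe_nonneg)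
    have hsplit : g t p - g t q = JA ((gradient HA p.1 - gradient HA q.1) +
        Cs ((S t (p.2 - q.2)) - C (p.1 - q.1))) := by
      rw [hg]
      simp only [map_sub, map_add]
      abel
    rw [hsplit]
    have hinner : ‖(gradient HA p.1 - gradient HA q.1) +
        Cs ((S t (p.2 - q.2)) - C (p.1 - q.1))‖ ≤
        ((L : ℝ) + ‖Cs‖ * (1 + ‖C‖)) * ‖p - q‖ := by
      have hCsb : ‖Cs ((S t (p.2 - q.2)) - C (p.1 - q.1))‖ ≤ ‖Cs‖ * (1 + ‖C‖) * ‖p - q‖ := by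
        calc ‖Cs ((S t (p.2 - q.2)) - C (p.1 - q.1))‖
            ≤ ‖Cs‖ * ‖(S t (p.2 - q.2)) - C (p.1 - q.1)‖ := Cs.le_opNorm _
          _ ≤ ‖Cs‖ * (‖S t (p.2 - q.2)‖ + ‖C (p.1 - q.1)‖) :=
              mul_le_mul_of_nonneg_left (norm_sub_le _ _) (norm_nonneg _)
          _ ≤ ‖Cs‖ * (‖p - q‖ + ‖C‖ * ‖p - q‖) := by
              apply mul_le_mul_of_nonneg_left _ (norm_nonneg _)
              apply add_le_add
              · rw [hSiso]; exact h2
              · exact (C.le_opNorm _).trans (mul_le_mul_of_nonneg_left h1 (norm_nonneg _))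
          _ = ‖Cs‖ * (1 + ‖C‖) * ‖p - q‖ := by ring
      calc ‖(gradient HA p.1 - gradient HA q.1) + Cs ((S t (p.2 - q.2)) - C (p.1 - q.1))‖
          ≤ ‖gradient HA p.1 - gradient HA q.1‖ + ‖Cs ((S t (p.2 - q.2)) - C (p.1 - q.1))‖ :=
            norm_add_le _ _
        _ ≤ (L : ℝ) * ‖p - q‖ + ‖Cs‖ * (1 + ‖C‖) * ‖p - q‖ := add_le_add hgrad hCsb
        _ = ((L : ℝ) + ‖Cs‖ * (1 + ‖C‖)) * ‖p - q‖ := by ring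
    calc ‖JA ((gradient HA p.1 - gradient HA q.1) + Cs ((S t (p.2 - q.2)) - C (p.1 - q.1)))‖
        ≤ ‖JA‖ * ‖(gradient HA p.1 - gradient HA q.1) +
            Cs ((S t (p.2 - q.2)) - C (p.1 - q.1))‖ := JA.le_opNorm _
      _ ≤ ‖JA‖ * (((L : ℝ) + ‖Cs‖ * (1 + ‖C‖)) * ‖p - q‖) :=
          mul_le_mul_of_nonneg_left hinner (norm_nonneg _)
      _ = (Kg : ℝ) * ‖p - q‖ := by
          rw [hKg]
          push_cast [coe_nnnorm]
          ring
  have hfnorm : ∀ t p q, ‖f t p - f t q‖ ≤ (1 + ‖C‖) * ‖g t p - g t q‖ := by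
    intro t p q
    have : f t p - f t q = (g t p - g t q, S (-t) (C (g t p - g t q))) := by
      rw [hf]; simp only [map_sub, Prod.mk_sub_mk]
    rw [this, Prod.norm_def]
    have hC0 : (0:ℝ) ≤ ‖C‖ := norm_nonneg _
    have hg0 : (0:ℝ) ≤ ‖g t p - g t q‖ := norm_nonneg _
    apply max_le
    · nlinarith
    · rw [hSiso]
      exact (C.le_opNorm _).trans (by nlinarith)
  set Kf : NNReal := (1 + ‖C‖₊) * Kg + 1 with hKf
  have hKfpos : (0:ℝ) < Kf := by
    rw [hKf]; push_cast; positivity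
  have hfLip : ∀ t, LipschitzWith Kf (f t) := by
    intro t
    apply LipschitzWith.of_dist_le_mul
    intro p q
    rw [dist_eq_norm, dist_eq_norm]
    calc ‖f t p - f t q‖ ≤ (1 + ‖C‖) * ‖g t p - g t q‖ := hfnorm t p q
      _ ≤ (1 + ‖C‖) * ((Kg : ℝ) * ‖p - q‖) := by
          apply mul_le_mul_of_nonneg_left _ (by positivity)
          have := (hgLip t).dist_le_mul p q
          rwa [dist_eq_norm, dist_eq_norm] at this
      _ ≤ (Kf : ℝ) * ‖p - q‖ := by
          rw [hKf]
          push_cast [coe_nnnorm]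
          nlinarith [norm_nonneg (p - q), NNReal.coe_nonneg Kg, norm_nonneg C]
  have hgc : Continuous fun q : ℝ × (Z × H) => g q.1 q.2 := by
    apply JA.continuous.comp
    apply Continuous.add
    · exact hgradc.comp (continuous_fst.comp continuous_snd)
    · exact Cs.continuous.comp ((hSjoint.comp (continuous_fst.prodMk
        (continuous_snd.comp continuous_snd))).sub
        (C.continuous.comp (continuous_fst.comp continuous_snd)))
  have hfc : Continuous (Function.uncurry f) := by
    apply Continuous.prodMk hgc
    exact hSjoint.comp ((continuous_fst.neg).prodMk (C.continuous.comp hgc))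
  set A : ℝ := (1 + ‖C‖) * (‖JA‖ * (‖gradient HA z₀‖ + ‖Cs‖ * (‖ξ₀‖ + ‖C‖ * ‖z₀‖))) with hA
  have hA0 : (0:ℝ) ≤ A := by rw [hA]; positivity
  have hAb : ∀ t, ‖f t x₀‖ ≤ A := by
    intro t
    have hgb : ‖g t x₀‖ ≤ ‖JA‖ * (‖gradient HA z₀‖ + ‖Cs‖ * (‖ξ₀‖ + ‖C‖ * ‖z₀‖)) := by
      calc ‖g t x₀‖ ≤ ‖JA‖ * ‖gradient HA z₀ + Cs (S t ξ₀ - C z₀)‖ := JA.le_opNorm _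
        _ ≤ ‖JA‖ * (‖gradient HA z₀‖ + ‖Cs‖ * (‖ξ₀‖ + ‖C‖ * ‖z₀‖)) := by
            apply mul_le_mul_of_nonneg_left _ (norm_nonneg _)
            refine (norm_add_le _ _).trans (add_le_add le_rfl ?_)
            refine (Cs.le_opNorm _).trans (mul_le_mul_of_nonneg_left ?_ (norm_nonneg _))
            refine (norm_sub_le _ _).trans (add_le_add ?_ (C.le_opNorm _))
            rw [hSiso]
    have h0 : f t x₀ - f t x₀ = 0 := sub_self _
    have hn : ‖f t x₀‖ ≤ (1 + ‖C‖) * ‖g t x₀‖ := by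
      have : f t x₀ = (g t x₀, S (-t) (C (g t x₀))) := rfl
      rw [this, Prod.norm_def]
      have hC0 : (0:ℝ) ≤ ‖C‖ := norm_nonneg _
      have hg0 : (0:ℝ) ≤ ‖g t x₀‖ := norm_nonneg _
      apply max_le
      · nlinarith
      · rw [hSiso]
        exact (C.le_opNorm _).trans (by nlinarith)
    rw [hA]
    exact hn.trans (mul_le_mul_of_nonneg_left hgb (by positivity))
  obtain ⟨x, ⟨hx0, hxder⟩, hxuniq⟩ := msw_picard f Kf hKfpos hfLip hfc x₀ A hA0 hAb
  have hxcont : Continuous x := by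
    rw [continuous_iff_continuousAt]; exact fun t => (hxder t).continuousAt
  set z : ℝ → Z := fun t => (x t).1 with hz
  set ξ : ℝ → H := fun t => (x t).2 with hξ
  have hzder : ∀ t, HasDerivAt z (g t (x t)) t := fun t =>
    (ContinuousLinearMap.fst ℝ Z H).hasFDerivAt.comp_hasDerivAt t (hxder t)
  have hξder : ∀ t, HasDerivAt ξ (S (-t) (C (g t (x t)))) t := fun t =>
    (ContinuousLinearMap.snd ℝ Z H).hasFDerivAt.comp_hasDerivAt t (hxder t)
  have hzderiv : ∀ t, deriv z t = g t (x t) := fun t => (hzder t).deriv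
  have hzcont : Continuous z := continuous_fst.comp hxcont
  have hξcont : Continuous ξ := continuous_snd.comp hxcont
  have hderivcont : Continuous fun t => g t (x t) := hgc.comp (continuous_id.prodMk hxcont)
  have hzC1 : ContDiff ℝ 1 z := by
    rw [contDiff_one_iff_deriv]
    refine ⟨fun t => (hzder t).differentiableAt, ?_⟩
    rw [funext hzderiv]
    exact hderivcont
  set η : ℝ → H := fun t => S t (ξ t) - C (z t) with hη
  have hηcont : Continuous η :=
    (hSjoint.comp (continuous_id.prodMk hξcont)).sub (C.continuous.comp hzcont)
  have hz0 : z 0 = z₀ := by simp [hz, hx0, hx₀]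
  have hξ0 : ξ 0 = ξ₀ := by simp [hξ, hx0, hx₀]
  have hη0 : η 0 = η₀ := by
    rw [hη]
    simp only [hξ0, hz0, hS0, ContinuousLinearMap.id_apply, hξ₀]
    abel
  have hScomp : ∀ (t s : ℝ) (w : H), S t (S (-s) w) = S (t - s) w := by
    intro t s w
    rw [sub_eq_add_neg, hSadd]; rfl
  have hφcont : Continuous fun s : ℝ => S (-s) (C (g s (x s))) :=
    hSjoint.comp ((continuous_id.neg).prodMk (C.continuous.comp hderivcont))
  have hξint : ∀ t, ξ t = ξ₀ + ∫ s in (0:ℝ)..t, S (-s) (C (g s (x s))) := by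
    intro t
    have h1 := intervalIntegral.integral_eq_sub_of_hasDerivAt
      (f := ξ) (f' := fun s => S (-s) (C (g s (x s))))
      (fun s _ => (hξder s)) (hφcont.intervalIntegrable 0 t)
    rw [h1, hξ0]
    abel
  have hkey : ∀ t, S t (ξ t) = S t ξ₀ + ∫ s in (0:ℝ)..t, S (t - s) (C (g s (x s))) := by
    intro t
    rw [hξint t, map_add]
    congr 1
    rw [← (S t).intervalIntegral_comp_comm (hφcont.intervalIntegrable 0 t)]
    exact intervalIntegral.integral_congr fun s _ => hScomp t s _
  refine ⟨(z, η), ⟨hzC1, hηcont, hz0, hη0, fun t => ⟨?_, ?_⟩⟩, ?_⟩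
  · show deriv z t = JA (gradient HA (z t) + Cs (η t))
    rw [hzderiv t, hg, hη]
  · show η t = S t (η₀ + C z₀) - C (z t) + ∫ s in (0:ℝ)..t, S (t - s) (C (deriv z s))
    have h1 : (∫ s in (0:ℝ)..t, S (t - s) (C (deriv z s)))
        = ∫ s in (0:ℝ)..t, S (t - s) (C (g s (x s))) := by
      simp only [hzderiv]
    have h2 : η t = S t (ξ t) - C (z t) := rfl
    rw [h1, h2, hkey t, ← hξ₀]
    abel
  · rintro ⟨z', η'⟩ ⟨hz'C1, hη'c, hz'0, hη'0, hpt⟩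
    have heq1 : ∀ t, deriv z' t = JA (gradient HA (z' t) + Cs (η' t)) := fun t => (hpt t).1
    have heq2 : ∀ t, η' t = S t (η₀ + C z₀) - C (z' t)
        + ∫ s in (0:ℝ)..t, S (t - s) (C (deriv z' s)) := fun t => (hpt t).2
    have hz'diff : Differentiable ℝ z' := (contDiff_one_iff_deriv.mp hz'C1).1
    have hdz'c : Continuous (deriv z') := (contDiff_one_iff_deriv.mp hz'C1).2
    set ξ' : ℝ → H := fun t => ξ₀ + ∫ s in (0:ℝ)..t, S (-s) (C (deriv z' s)) with hξ'
    have hφ'c : Continuous fun s : ℝ => S (-s) (C (deriv z' s)) :=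
      hSjoint.comp ((continuous_id.neg).prodMk (C.continuous.comp hdz'c))
    have hξ'der : ∀ t, HasDerivAt ξ' (S (-t) (C (deriv z' t))) t := by
      intro t
      have h1 := intervalIntegral.integral_hasDerivAt_right
        (hφ'c.intervalIntegrable 0 t) (hφ'c.stronglyMeasurableAtFilter _ _) hφ'c.continuousAt
      exact h1.const_add ξ₀
    have hSξ' : ∀ t, S t (ξ' t) = η' t + C (z' t) := by
      intro t
      rw [hξ', map_add, ← (S t).intervalIntegral_comp_comm (hφ'c.intervalIntegrable 0 t),
        intervalIntegral.integral_congr (fun s _ => hScomp t s (C (deriv z' s))),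
        heq2 t, hξ₀]
      abel
    have hsub : ∀ t, S t (ξ' t) - C (z' t) = η' t := by
      intro t; rw [hSξ' t]; abel
    have hgd : ∀ t, g t (z' t, ξ' t) = deriv z' t := by
      intro t
      rw [heq1 t, hg]
      simp only
      rw [hsub t]
    have hx'der : ∀ t, HasDerivAt (fun r => (z' r, ξ' r)) (f t (z' t, ξ' t)) t := by
      intro t
      have h1 : HasDerivAt z' (g t (z' t, ξ' t)) t := by
        rw [hgd t]; exact (hz'diff t).hasDerivAt
      have h2 : HasDerivAt ξ' (S (-t) (C (g t (z' t, ξ' t)))) t := by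
        rw [hgd t]; exact hξ'der t
      exact h1.prodMk h2
    have hx'0 : (fun r => (z' r, ξ' r)) 0 = x₀ := by
      show (z' 0, ξ' 0) = x₀
      rw [hx₀, Prod.mk.injEq]
      refine ⟨hz'0, ?_⟩
      simp [hξ']
    have hxx : (fun r => (z' r, ξ' r)) = x := hxuniq _ ⟨hx'0, hx'der⟩
    have hzz : z' = z := by
      funext t; exact congrArg Prod.fst (congrFun hxx t)
    have hξξ : ξ' = ξ := by
      funext t; exact congrArg Prod.snd (congrFun hxx t)
    have hηη : η' = η := by
      funext t
      rw [← hsub t, hξξ, hzz]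
    rw [Prod.mk.injEq]
    exact ⟨hzz, hηη⟩
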